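/- For every real number u > 0 with u ≠ 1 and every non-negative integer m, the improper integral ∫₀^∞ xᵐ/((x+1)^{m+1} (xu+1)) dx converges and equals (-1)^m (u-1)^{-(m+1)} (log u - ∑_{j=1}^m (-1)^{j+1} (u-1)^j / j). -/

import Mathlib

open MeasureTheory Set Filter

private lemma ml_integrable (u : ℝ) (hu : 0 < u) (m : ℕ) :
    IntegrableOn (fun x : ℝ => x ^ m / ((x + 1) ^ (m + 1) * (x * u + 1))) (Ioi 0) := by
  set c := min u 1 with hc
  have hc0 : 0 < c := lt_min hu one_pos
  have hcu : c ≤ u := min_le_left _ _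
  have hc1 : c ≤ 1 := min_le_right _ _
  apply Integrable.mono' (g := fun x : ℝ => c⁻¹ * (1 + x ^ 2)⁻¹)
  · exact (integrable_inv_one_add_sq.const_mul c⁻¹).integrableOn
  · apply ContinuousOn.aestronglyMeasurable _ measurableSet_Ioi
    apply ContinuousOn.div (by fun_prop) (by fun_prop)
    intro x hx
    have hx0 : (0:ℝ) < x := hx
    have h1 : (0:ℝ) < x + 1 := by linarith
    have h2 : (0:ℝ) < x * u + 1 := by nlinarith
    exact (mul_pos (pow_pos h1 _) h2).ne'
  · filter_upwards [ae_restrict_mem measurableSet_Ioi] with x hx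
    have hx0 : (0:ℝ) < x := hx
    have h1 : (0:ℝ) < x + 1 := by linarith
    have h2 : (0:ℝ) < x * u + 1 := by nlinarith
    have hP : (0:ℝ) < (x + 1) ^ (m + 1) * (x * u + 1) := mul_pos (pow_pos h1 _) h2
    have hQ : (0:ℝ) < c * (1 + x ^ 2) := by positivity
    rw [Real.norm_eq_abs, abs_of_nonneg (by positivity)]
    have key : x ^ m * (c * (1 + x ^ 2)) ≤ 1 * ((x + 1) ^ (m + 1) * (x * u + 1)) := by
      have hm : x ^ m ≤ (x + 1) ^ m := pow_le_pow_left₀ hx0.le (by linarith) m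
      have hq : c * (1 + x ^ 2) ≤ (x + 1) * (x * u + 1) := by nlinarith
      calc x ^ m * (c * (1 + x ^ 2)) ≤ (x + 1) ^ m * ((x + 1) * (x * u + 1)) :=
            mul_le_mul hm hq (by positivity) (by positivity)
        _ = 1 * ((x + 1) ^ (m + 1) * (x * u + 1)) := by ring
    calc x ^ m / ((x + 1) ^ (m + 1) * (x * u + 1)) ≤ 1 / (c * (1 + x ^ 2)) :=
          (div_le_div_iff₀ hP hQ).2 key
      _ = c⁻¹ * (1 + x ^ 2)⁻¹ := by rw [one_div, mul_inv]

private lemma ml_integrable_g (m : ℕ) :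
    IntegrableOn (fun x : ℝ => x ^ m / (x + 1) ^ (m + 2)) (Ioi 0) := by
  apply Integrable.mono' (g := fun x : ℝ => (1 + x ^ 2)⁻¹)
  · exact integrable_inv_one_add_sq.integrableOn
  · apply ContinuousOn.aestronglyMeasurable _ measurableSet_Ioi
    apply ContinuousOn.div (by fun_prop) (by fun_prop)
    intro x hx
    have hx0 : (0:ℝ) < x := hx
    exact (pow_pos (by linarith) _).ne'
  · filter_upwards [ae_restrict_mem measurableSet_Ioi] with x hx
    have hx0 : (0:ℝ) < x := hx
    have h1 : (0:ℝ) < x + 1 := by linarith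
    rw [Real.norm_eq_abs, abs_of_nonneg (by positivity), ← one_div]
    have key : x ^ m * (1 + x ^ 2) ≤ 1 * (x + 1) ^ (m + 2) := by
      have hm : x ^ m ≤ (x + 1) ^ m := pow_le_pow_left₀ hx0.le (by linarith) m
      have hq : 1 + x ^ 2 ≤ (x + 1) ^ 2 := by nlinarith
      calc x ^ m * (1 + x ^ 2) ≤ (x + 1) ^ m * (x + 1) ^ 2 :=
            mul_le_mul hm hq (by positivity) (by positivity)
        _ = 1 * (x + 1) ^ (m + 2) := by ring
    exact (div_le_div_iff₀ (pow_pos h1 _) (by positivity)).2 key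

private lemma ml_int_g (m : ℕ) :
    ∫ x in Ioi (0:ℝ), x ^ m / (x + 1) ^ (m + 2) = 1 / (m + 1) := by
  have hderiv : ∀ x ∈ Ici (0:ℝ),
      HasDerivAt (fun x : ℝ => (x / (x + 1)) ^ (m + 1) / (m + 1))
        (x ^ m / (x + 1) ^ (m + 2)) x := by
    intro x hx
    have hx0 : (0:ℝ) ≤ x := hx
    have h1' : (0:ℝ) < x + 1 := by linarith
    have hd : HasDerivAt (fun x : ℝ => x / (x + 1))
        ((1 * (x + 1) - x * 1) / (x + 1) ^ 2) x :=
      (hasDerivAt_id x).div ((hasDerivAt_id x).add_const 1) h1'.ne'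
    have h2 := (hd.pow (m + 1)).div_const (m + 1)
    refine h2.congr_deriv ?_
    simp only [Nat.add_sub_cancel]
    push_cast
    rw [div_pow]
    field_simp
    ring
  have htend : Tendsto (fun x : ℝ => (x / (x + 1)) ^ (m + 1) / (m + 1)) atTop
      (nhds (1 / (m + 1))) := by
    have h0 : Tendsto (fun x : ℝ => x / (x + 1)) atTop (nhds 1) := by
      have h1 : Tendsto (fun x : ℝ => 1 - (x + 1)⁻¹) atTop (nhds 1) := by
        have h2 : Tendsto (fun x : ℝ => (x + 1)⁻¹) atTop (nhds 0) :=
          tendsto_inv_atTop_zero.comp (tendsto_atTop_add_const_right atTop 1 tendsto_id)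
        simpa using (tendsto_const_nhds (x := (1:ℝ)) (f := atTop)).sub h2
      apply h1.congr'
      filter_upwards [eventually_gt_atTop (0:ℝ)] with x hx
      have : x + 1 ≠ 0 := by positivity
      field_simp
      ring
    have := (h0.pow (m + 1)).div_const ((m:ℝ) + 1)
    simpa using this
  have := integral_Ioi_of_hasDerivAt_of_tendsto' hderiv (ml_integrable_g m) htend
  rw [this]
  norm_num

private lemma ml_base (u : ℝ) (hu : 0 < u) (hu1 : u ≠ 1) :
    ∫ x in Ioi (0:ℝ), x ^ 0 / ((x + 1) ^ (0 + 1) * (x * u + 1)) =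
      Real.log u / (u - 1) := by
  have ha : u - 1 ≠ 0 := sub_ne_zero.2 hu1
  have hderiv : ∀ x ∈ Ici (0:ℝ),
      HasDerivAt (fun x : ℝ => (Real.log (x * u + 1) - Real.log (x + 1)) / (u - 1))
        (x ^ 0 / ((x + 1) ^ (0 + 1) * (x * u + 1))) x := by
    intro x hx
    have hx0 : (0:ℝ) ≤ x := hx
    have h1 : (0:ℝ) < x + 1 := by linarith
    have h2 : (0:ℝ) < x * u + 1 := by nlinarith
    have hd1 : HasDerivAt (fun x : ℝ => Real.log (x * u + 1)) (u / (x * u + 1)) x := by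
      have hlin : HasDerivAt (fun x : ℝ => x * u + 1) (1 * u) x :=
        ((hasDerivAt_id x).mul_const u).add_const 1
      simpa using hlin.log h2.ne'
    have hd2 : HasDerivAt (fun x : ℝ => Real.log (x + 1)) (1 / (x + 1)) x := by
      have hlin : HasDerivAt (fun x : ℝ => x + 1) 1 x := (hasDerivAt_id x).add_const 1
      simpa using hlin.log h1.ne'
    have := (hd1.sub hd2).div_const (u - 1)
    refine this.congr_deriv ?_
    field_simp
    ring
  have htend : Tendsto (fun x : ℝ => (Real.log (x * u + 1) - Real.log (x + 1)) / (u - 1))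
      atTop (nhds (Real.log u / (u - 1))) := by
    have hratio : Tendsto (fun x : ℝ => (x * u + 1) / (x + 1)) atTop (nhds u) := by
      have hinv : Tendsto (fun x : ℝ => x⁻¹) atTop (nhds 0) := tendsto_inv_atTop_zero
      have hn : Tendsto (fun x : ℝ => u + x⁻¹) atTop (nhds u) := by
        simpa using (tendsto_const_nhds (x := u) (f := atTop)).add hinv
      have hd : Tendsto (fun x : ℝ => 1 + x⁻¹) atTop (nhds 1) := by
        simpa using (tendsto_const_nhds (x := (1:ℝ)) (f := atTop)).add hinv
      have h1 : Tendsto (fun x : ℝ => (u + x⁻¹) / (1 + x⁻¹)) atTop (nhds u) := by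
        simpa [Pi.div_def] using hn.div hd one_ne_zero
      apply h1.congr'
      filter_upwards [eventually_gt_atTop (0:ℝ)] with x hx
      have h1 : x + 1 ≠ 0 := by positivity
      have h2 : x ≠ 0 := hx.ne'
      field_simp
    have hlog : Tendsto (fun x : ℝ => Real.log ((x * u + 1) / (x + 1))) atTop
        (nhds (Real.log u)) :=
      (Real.continuousAt_log hu.ne').tendsto.comp hratio
    have heq : (fun x : ℝ => Real.log (x * u + 1) - Real.log (x + 1)) =ᶠ[atTop]
        (fun x : ℝ => Real.log ((x * u + 1) / (x + 1))) := by
      filter_upwards [eventually_gt_atTop (0:ℝ)] with x hx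
      have h1 : (0:ℝ) < x + 1 := by linarith
      have h2 : (0:ℝ) < x * u + 1 := by nlinarith
      rw [Real.log_div h2.ne' h1.ne']
    exact ((hlog.congr' heq.symm)).div_const (u - 1)
  have := integral_Ioi_of_hasDerivAt_of_tendsto' hderiv (ml_integrable u hu 0) htend
  rw [this]
  norm_num

theorem modified_log_integral (u : ℝ) (hu : 0 < u) (hu1 : u ≠ 1) (m : ℕ) :
    IntegrableOn (fun x : ℝ => x ^ m / ((x + 1) ^ (m + 1) * (x * u + 1))) (Ioi 0) ∧
    ∫ x in Ioi (0:ℝ), x ^ m / ((x + 1) ^ (m + 1) * (x * u + 1)) =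
      (-1 : ℝ) ^ m * ((u - 1) ^ (m + 1))⁻¹ *
        (Real.log u - ∑ j ∈ Finset.Icc 1 m, (-1 : ℝ) ^ (j + 1) * (u - 1) ^ j / j) := by
  refine ⟨ml_integrable u hu m, ?_⟩
  have ha : u - 1 ≠ 0 := sub_ne_zero.2 hu1
  induction m with
  | zero =>
    rw [ml_base u hu hu1]
    simp [div_eq_mul_inv, mul_comm]
  | succ m ih =>
    have key : EqOn (fun x : ℝ => x ^ (m + 1) / ((x + 1) ^ (m + 1 + 1) * (x * u + 1)))
        (fun x : ℝ => (u - 1)⁻¹ *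
          (x ^ m / (x + 1) ^ (m + 2) - x ^ m / ((x + 1) ^ (m + 1) * (x * u + 1)))) (Ioi 0) := by
      intro x hx
      have hx0 : (0:ℝ) < x := hx
      have h1 : (0:ℝ) < x + 1 := by linarith
      have h2 : (0:ℝ) < x * u + 1 := by nlinarith
      simp only
      field_simp
      ring
    rw [setIntegral_congr_fun measurableSet_Ioi key, integral_const_mul,
      integral_sub (ml_integrable_g m) (ml_integrable u hu m), ml_int_g, ih]
    rw [Finset.sum_Icc_succ_top (Nat.le_add_left 1 m)]
    have hpow : (u - 1) ^ (m + 1) ≠ 0 := pow_ne_zero _ ha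
    have hm1 : ((m:ℝ) + 1) ≠ 0 := by positivity
    push_cast
    rcases Nat.even_or_odd m with hm | hm
    · have h1 : ((-1:ℝ)) ^ m = 1 := hm.neg_one_pow
      have h2 : ((-1:ℝ)) ^ (m + 1) = -1 := hm.add_one.neg_one_pow
      have h3 : ((-1:ℝ)) ^ (m + 1 + 1) = 1 := by rw [pow_succ, h2]; ring
      rw [h3, h2, h1]
      field_simp
      ring
    · have h1 : ((-1:ℝ)) ^ m = -1 := hm.neg_one_pow
      have h2 : ((-1:ℝ)) ^ (m + 1) = 1 := hm.add_one.neg_one_pow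
      have h3 : ((-1:ℝ)) ^ (m + 1 + 1) = -1 := by rw [pow_succ, h2]; ring
      rw [h3, h2, h1]
      field_simp
      ring
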